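/- Let k ≥ 1, d ≥ 1, let γ_1 < γ_2 < … < γ_{k+1} be strictly increasing real numbers, and let q_1, …, q_k ∈ ℝ^d satisfy ‖Σ_{l=j}^{i} q_l‖_2 ≤ γ_{i+1} − γ_j for all 1 ≤ j ≤ i ≤ k. Then for all 1 ≤ j ≤ i ≤ k and all α, β ∈ [0,1], ‖Σ_{l=j}^{i−1} q_l + α·q_i − β·q_j‖_2 ≤ |γ_i^α − γ_j^β|, where the sum Σ_{l=j}^{i−1} q_l is empty (equal to 0) when j = i, and γ_i^α := γ_i + α(γ_{i+1} − γ_i), γ_j^β := γ_j + β(γ_{j+1} − γ_j). -/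

import Mathlib

set_option maxHeartbeats 1600000


/-- part of the proof of Proposition 5. If
`‖Σ_{l=j}^{i} q_l‖₂ ≤ γ_{i+1} - γ_j` for all `j ≤ i`, then for all `j ≤ i` and all
`α, β ∈ [0,1]`, `‖Σ_{l=j}^{i-1} q_l + α q_i - β q_j‖₂ ≤ |γ_i^α - γ_j^β|`, where
`γ_i^α = γ_i + α (γ_{i+1} - γ_i)` (the sum is empty when `j = i`). -/
theorem sublabel_norm_le {k d : ℕ} (hk : 1 ≤ k) (hd : 1 ≤ d) (γ : Fin (k+1) → ℝ)
    (hγ : StrictMono γ) (q : Fin k → EuclideanSpace ℝ (Fin d))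
    (h : ∀ j i : Fin k, j ≤ i → ‖∑ l ∈ Finset.Icc j i, q l‖ ≤ γ i.succ - γ j.castSucc) :
    ∀ j i : Fin k, j ≤ i → ∀ α ∈ Set.Icc (0:ℝ) 1, ∀ β ∈ Set.Icc (0:ℝ) 1,
      ‖(∑ l ∈ Finset.Ico j i, q l) + α • q i - β • q j‖
        ≤ |(γ i.castSucc + α * (γ i.succ - γ i.castSucc))
            - (γ j.castSucc + β * (γ j.succ - γ j.castSucc))| := by
  intro j i hji α hα β hβ
  obtain ⟨hα0, hα1⟩ := hα
  obtain ⟨hβ0, hβ1⟩ := hβ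
  rcases eq_or_lt_of_le hji with heq | hlt
  · -- case j = i
    subst heq
    have hq : ‖q j‖ ≤ γ j.succ - γ j.castSucc := by
      have := h j j le_rfl
      simpa using this
    have hIco : Finset.Ico j j = ∅ := Finset.Ico_self j
    rw [hIco]
    simp only [Finset.sum_empty, zero_add]
    have hv : α • q j - β • q j = (α - β) • q j := by module
    rw [hv, norm_smul, Real.norm_eq_abs]
    have habs : |(γ j.castSucc + α * (γ j.succ - γ j.castSucc))
        - (γ j.castSucc + β * (γ j.succ - γ j.castSucc))|
        = |α - β| * (γ j.succ - γ j.castSucc) := by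
      have hpos : (0:ℝ) ≤ γ j.succ - γ j.castSucc :=
        sub_nonneg.mpr (hγ (Fin.castSucc_lt_succ : j.castSucc < j.succ)).le
      rw [show (γ j.castSucc + α * (γ j.succ - γ j.castSucc))
          - (γ j.castSucc + β * (γ j.succ - γ j.castSucc))
          = (α - β) * (γ j.succ - γ j.castSucc) by ring,
        abs_mul, abs_of_nonneg hpos]
    rw [habs]
    exact mul_le_mul_of_nonneg_left hq (abs_nonneg _)
  · -- case j < i
    have hik : (i : ℕ) < k := i.isLt
    have hji' : (j : ℕ) < (i : ℕ) := hlt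
    set i' : Fin k := ⟨(i : ℕ) - 1, by omega⟩ with hi'
    set j' : Fin k := ⟨(j : ℕ) + 1, by omega⟩ with hj'
    set D := ∑ l ∈ Finset.Ioo j i, q l with hD
    set a := q i with ha
    set b := q j with hb
    -- sum identities
    have hjIoo : j ∉ Finset.Ioo j i := by simp
    have hiIoo : i ∉ Finset.Ioo j i := by simp
    have hsumIco : ∑ l ∈ Finset.Ico j i, q l = b + D := by
      rw [← Finset.Ioo_insert_left hlt, Finset.sum_insert hjIoo]
    have hsumIoc : ∑ l ∈ Finset.Ioc j i, q l = a + D := by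
      rw [← Finset.Ioo_insert_right hlt, Finset.sum_insert hiIoo]
    have hsumIcc : ∑ l ∈ Finset.Icc j i, q l = b + (a + D) := by
      have hjIoc : j ∉ Finset.Ioc j i := by simp
      rw [← Finset.Ioc_insert_left hlt.le, Finset.sum_insert hjIoc, hsumIoc]
    -- index identities
    have hi'succ : i'.succ = i.castSucc := by
      apply Fin.ext
      simp [hi', Fin.val_succ]
      omega
    have hj'cast : j'.castSucc = j.succ := by
      apply Fin.ext
      simp [hj']
    -- norm bounds
    have hnA : ‖b + (a + D)‖ ≤ γ i.succ - γ j.castSucc := by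
      rw [← hsumIcc]; exact h j i hji
    have hnB : ‖b + D‖ ≤ γ i.castSucc - γ j.castSucc := by
      have hset : Finset.Icc j i' = Finset.Ico j i := by
        ext l
        simp only [Finset.mem_Icc, Finset.mem_Ico, Fin.le_def, Fin.lt_def, hi']
        omega
      have := h j i' (by rw [Fin.le_def]; simp [hi']; omega)
      rw [hset, hsumIco, hi'succ] at this
      exact this
    have hnC : ‖a + D‖ ≤ γ i.succ - γ j.succ := by
      have hset : Finset.Icc j' i = Finset.Ioc j i := by
        ext l
        simp only [Finset.mem_Icc, Finset.mem_Ioc, Fin.le_def, Fin.lt_def, hj']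
        omega
      have := h j' i (by rw [Fin.le_def]; simp [hj']; omega)
      rw [hset, hsumIoc, hj'cast] at this
      exact this
    have hnD : ‖D‖ ≤ γ i.castSucc - γ j.succ := by
      by_cases hcase : (j : ℕ) + 1 < (i : ℕ)
      · have hset : Finset.Icc j' i' = Finset.Ioo j i := by
          ext l
          simp only [Finset.mem_Icc, Finset.mem_Ioo, Fin.le_def, Fin.lt_def, hi', hj']
          omega
        have := h j' i' (by rw [Fin.le_def]; simp [hi', hj']; omega)
        rw [hset, hi'succ, hj'cast] at this
        exact this
      · have hji1 : (j : ℕ) + 1 = (i : ℕ) := by omega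
        have hempty : Finset.Ioo j i = ∅ := by
          ext l
          simp only [Finset.mem_Ioo, Fin.lt_def, Finset.notMem_empty, iff_false]
          omega
        have heqγ : γ i.castSucc = γ j.succ := by
          congr 1
          apply Fin.ext
          simp [Fin.val_succ]
          omega
        rw [hD, hempty]
        simp [heqγ]
    -- monotonicity facts
    have hγji : γ j.succ ≤ γ i.castSucc := by
      apply hγ.monotone
      rw [Fin.le_def]
      simp [Fin.val_succ]
      omega
    have hγi : γ i.castSucc ≤ γ i.succ := (hγ (Fin.castSucc_lt_succ : i.castSucc < i.succ)).le
    have hγj : γ j.castSucc ≤ γ j.succ := (hγ (Fin.castSucc_lt_succ : j.castSucc < j.succ)).le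
    have hRHSnn : (0:ℝ) ≤ (γ i.castSucc + α * (γ i.succ - γ i.castSucc))
        - (γ j.castSucc + β * (γ j.succ - γ j.castSucc)) := by nlinarith
    rw [abs_of_nonneg hRHSnn, hsumIco]
    -- decompose the vector
    clear_value a b D
    have hv : (b + D) + α • a - β • b
        = ((1-β)*α) • (b + (a + D)) + ((1-β)*(1-α)) • (b + D)
          + (β*α) • (a + D) + (β*(1-α)) • D := by module
    rw [hv]
    have c1 : (0:ℝ) ≤ (1-β)*α := by nlinarith
    have c2 : (0:ℝ) ≤ (1-β)*(1-α) := by nlinarith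
    have c3 : (0:ℝ) ≤ β*α := by nlinarith
    have c4 : (0:ℝ) ≤ β*(1-α) := by nlinarith
    have hnorm : ‖((1-β)*α) • (b + (a + D)) + ((1-β)*(1-α)) • (b + D)
          + (β*α) • (a + D) + (β*(1-α)) • D‖
        ≤ ((1-β)*α) * ‖b + (a + D)‖ + ((1-β)*(1-α)) * ‖b + D‖
          + (β*α) * ‖a + D‖ + (β*(1-α)) * ‖D‖ := by
      calc ‖((1-β)*α) • (b + (a + D)) + ((1-β)*(1-α)) • (b + D)
          + (β*α) • (a + D) + (β*(1-α)) • D‖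
          ≤ ‖((1-β)*α) • (b + (a + D)) + ((1-β)*(1-α)) • (b + D)
          + (β*α) • (a + D)‖ + ‖(β*(1-α)) • D‖ := norm_add_le _ _
        _ ≤ (‖((1-β)*α) • (b + (a + D)) + ((1-β)*(1-α)) • (b + D)‖
            + ‖(β*α) • (a + D)‖) + ‖(β*(1-α)) • D‖ :=
            add_le_add_left (norm_add_le _ _) _
        _ ≤ ((‖((1-β)*α) • (b + (a + D))‖ + ‖((1-β)*(1-α)) • (b + D)‖)
            + ‖(β*α) • (a + D)‖) + ‖(β*(1-α)) • D‖ :=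
            add_le_add_left (add_le_add_left (norm_add_le _ _) _) _
        _ = ((1-β)*α) * ‖b + (a + D)‖ + ((1-β)*(1-α)) * ‖b + D‖
          + (β*α) * ‖a + D‖ + (β*(1-α)) * ‖D‖ := by
            rw [norm_smul, norm_smul, norm_smul, norm_smul,
              Real.norm_eq_abs, Real.norm_eq_abs, Real.norm_eq_abs, Real.norm_eq_abs,
              abs_of_nonneg c1, abs_of_nonneg c2, abs_of_nonneg c3, abs_of_nonneg c4]
    refine hnorm.trans ?_
    have e1 := mul_le_mul_of_nonneg_left hnA c1
    have e2 := mul_le_mul_of_nonneg_left hnB c2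
    have e3 := mul_le_mul_of_nonneg_left hnC c3
    have e4 := mul_le_mul_of_nonneg_left hnD c4
    have key : ((1-β)*α) * (γ i.succ - γ j.castSucc)
        + ((1-β)*(1-α)) * (γ i.castSucc - γ j.castSucc)
        + (β*α) * (γ i.succ - γ j.succ)
        + (β*(1-α)) * (γ i.castSucc - γ j.succ)
        = (γ i.castSucc + α * (γ i.succ - γ i.castSucc))
            - (γ j.castSucc + β * (γ j.succ - γ j.castSucc)) := by ring
    linarith
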